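/- Let T be a tree on n vertices with positive real number edge weights, let D be its distance matrix, and let L be the Laplacian matrix of T obtained by replacing each edge weight by its reciprocal. Let μ_1 > 0 > μ_2 ≥ … ≥ μ_n be the eigenvalues of D and λ_1 ≥ λ_2 ≥ … ≥ λ_{n−1} > λ_n = 0 the eigenvalues of L. Then 0 > −2/λ_1 ≥ μ_2 ≥ −2/λ_2 ≥ μ_3 ≥ … ≥ −2/λ_{n−1} ≥ μ_n. -/

import Mathlib

open Matrix

section helpers
open Finset

private lemma dp_sum {n : ℕ} {ι : Type*} (s : Finset ι) (g : ι → (Fin n → ℝ)) (y : Fin n → ℝ) :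
    y ⬝ᵥ (∑ i ∈ s, g i) = ∑ i ∈ s, y ⬝ᵥ g i := by
  classical
  induction s using Finset.induction_on with
  | empty => simp
  | insert _ _ h ih => simp [Finset.sum_insert h, dotProduct_add, ih]

private lemma sum_dp {n : ℕ} {ι : Type*} (s : Finset ι) (g : ι → (Fin n → ℝ)) (y : Fin n → ℝ) :
    (∑ i ∈ s, g i) ⬝ᵥ y = ∑ i ∈ s, g i ⬝ᵥ y := by
  classical
  induction s using Finset.induction_on with
  | empty => simp
  | insert _ _ h ih => simp [Finset.sum_insert h, add_dotProduct, ih]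

private lemma mv_sum {n : ℕ} {ι : Type*} (M : Matrix (Fin n) (Fin n) ℝ) (s : Finset ι)
    (g : ι → (Fin n → ℝ)) : M *ᵥ (∑ i ∈ s, g i) = ∑ i ∈ s, M *ᵥ g i := by
  classical
  induction s using Finset.induction_on with
  | empty => simp
  | insert _ _ h ih => simp [Finset.sum_insert h, Matrix.mulVec_add, ih]

private lemma li_of_orth {n : ℕ} (f : Fin n → Fin n → ℝ)
    (horth : ∀ k l, f k ⬝ᵥ f l = if k = l then 1 else 0) : LinearIndependent ℝ f := by
  rw [Fintype.linearIndependent_iff]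
  intro g hg i
  have h := congrArg (fun y => f i ⬝ᵥ y) hg
  simp only [dotProduct_zero] at h
  rw [dp_sum] at h
  simpa [dotProduct_smul, horth] using h

private lemma exists_common_vec {n : ℕ} (u v : Fin n → Fin n → ℝ)
    (hu : LinearIndependent ℝ u) (hv : LinearIndependent ℝ v)
    (A B : Finset (Fin n)) (hcard : n < A.card + B.card) :
    ∃ x : Fin n → ℝ, x ≠ 0 ∧
      x ∈ Submodule.span ℝ (Set.range (fun a : A => u a)) ∧
      x ∈ Submodule.span ℝ (Set.range (fun b : B => v b)) := by
  set S := Submodule.span ℝ (Set.range (fun a : A => u a)) with hSdef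
  set T := Submodule.span ℝ (Set.range (fun b : B => v b)) with hTdef
  have hS : Module.finrank ℝ S = A.card :=
    (finrank_span_eq_card (hu.comp Subtype.val Subtype.val_injective)).trans
      (Fintype.card_coe A)
  have hT : Module.finrank ℝ T = B.card :=
    (finrank_span_eq_card (hv.comp Subtype.val Subtype.val_injective)).trans
      (Fintype.card_coe B)
  have hsup : Module.finrank ℝ (S ⊔ T : Submodule ℝ (Fin n → ℝ)) ≤ n := by
    have := Submodule.finrank_le (S ⊔ T : Submodule ℝ (Fin n → ℝ))
    simpa [Module.finrank_fintype_fun_eq_card] using this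
  have key := Submodule.finrank_sup_add_finrank_inf_eq S T
  have hpos : 0 < Module.finrank ℝ (S ⊓ T : Submodule ℝ (Fin n → ℝ)) := by omega
  obtain ⟨⟨x, hx⟩, h0⟩ := (Module.finrank_pos_iff_exists_ne_zero (R := ℝ)).mp hpos
  exact ⟨x, by simpa [Submodule.coe_eq_zero] using h0, hx.1, hx.2⟩

private lemma quad_repr {n : ℕ} (M : Matrix (Fin n) (Fin n) ℝ)
    (f : Fin n → Fin n → ℝ)
    (horth : ∀ k l, f k ⬝ᵥ f l = if k = l then 1 else 0)
    (A : Finset (Fin n)) (ν : Fin n → ℝ)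
    (hdiag : ∀ k ∈ A, ∀ l ∈ A, f k ⬝ᵥ (M *ᵥ f l) = if k = l then ν k else 0)
    {x : Fin n → ℝ} (hx : x ∈ Submodule.span ℝ (Set.range (fun a : A => f a))) :
    ∃ c : A → ℝ, (x ⬝ᵥ x = ∑ a, (c a)^2) ∧ (x ⬝ᵥ (M *ᵥ x) = ∑ a, (c a)^2 * ν a) := by
  obtain ⟨c, rfl⟩ := (Submodule.mem_span_range_iff_exists_fun ℝ).mp hx
  refine ⟨c, ?_, ?_⟩
  · rw [sum_dp]
    refine Finset.sum_congr rfl fun a _ => ?_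
    rw [smul_dotProduct, dp_sum]
    have h1 : ∀ b : A, f (↑a : Fin n) ⬝ᵥ (c b • f ↑b) = if a = b then c b else 0 := by
      intro b
      rw [dotProduct_smul, horth]
      by_cases h : a = b
      · simp [h]
      · have h2 : ¬((a : Fin n) = (b : Fin n)) := fun hh => h (Subtype.ext hh)
        simp [h, h2]
    rw [Finset.sum_congr rfl fun b _ => h1 b, Finset.sum_ite_eq _ a _]
    simp [pow_two]
  · rw [mv_sum, sum_dp]
    refine Finset.sum_congr rfl fun a _ => ?_
    rw [smul_dotProduct, dp_sum]
    have h1 : ∀ b : A, f (↑a : Fin n) ⬝ᵥ (M *ᵥ (c b • f ↑b)) = if a = b then c b * ν ↑a else 0 := by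
      intro b
      rw [Matrix.mulVec_smul, dotProduct_smul, hdiag _ a.2 _ b.2]
      by_cases h : a = b
      · simp [h, mul_comm]
      · have h2 : ¬((a : Fin n) = (b : Fin n)) := fun hh => h (Subtype.ext hh)
        simp [h, h2]
    rw [Finset.sum_congr rfl fun b _ => h1 b, Finset.sum_ite_eq _ a _]
    simp [pow_two]; ring

private lemma tree_LDL {n : ℕ} (G : SimpleGraph (Fin n)) [DecidableRel G.Adj] (hT : G.IsTree)
    (w : Sym2 (Fin n) → ℝ) (hw : ∀ e ∈ G.edgeSet, 0 < w e)
    (D : Matrix (Fin n) (Fin n) ℝ)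
    (hD : ∀ (i j : Fin n) (p : G.Walk i j), p.IsPath → D i j = (p.edges.map w).sum)
    (L : Matrix (Fin n) (Fin n) ℝ)
    (hL : ∀ i j, L i j =
      if i = j then ∑ k ∈ G.neighborFinset i, (w (s(i, k)))⁻¹
      else if G.Adj i j then -(w (s(i, j)))⁻¹ else 0) :
    L * D * L = (-2 : ℝ) • L := by
  classical
  have hconn := hT.existsUnique_path
  have hwadj : ∀ {i j : Fin n}, G.Adj i j → 0 < w (s(i, j)) := by
    intro i j h
    exact hw _ ((SimpleGraph.mem_edgeSet G).mpr h)
  have hDsymm : ∀ i j, D i j = D j i := by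
    intro i j
    obtain ⟨p, hp, -⟩ := hconn i j
    rw [hD i j p hp, hD j i p.reverse hp.reverse]
    rw [SimpleGraph.Walk.edges_reverse, List.map_reverse, List.sum_reverse]
  have hDdiag : ∀ j, D j j = 0 := by
    intro j
    simpa using hD j j SimpleGraph.Walk.nil SimpleGraph.Walk.IsPath.nil
  have hDadj : ∀ {j k}, G.Adj j k → D j k = w (s(j, k)) := by
    intro j k h
    have hp : (SimpleGraph.Walk.cons h SimpleGraph.Walk.nil : G.Walk j k).IsPath := by
      simp [SimpleGraph.Walk.IsPath.nil, h.ne]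
    simpa using hD j k _ hp
  -- the step lemma
  have hstep : ∀ i j, i ≠ j → ∃ s, G.Adj j s ∧
      D i s = D i j - w (s(j, s)) ∧
      ∀ k, G.Adj j k → k ≠ s → D i k = D i j + w (s(j, k)) := by
    intro i j hij
    obtain ⟨p, hp, -⟩ := hconn j i
    have hnil : ¬ p.Nil := SimpleGraph.Walk.not_nil_of_ne (Ne.symm hij)
    obtain ⟨s, hjs, q, rfl⟩ := SimpleGraph.Walk.not_nil_iff.mp hnil
    have hq : q.IsPath := hp.of_cons
    have hDji : D j i = w (s(j, s)) + D s i := by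
      rw [hD j i _ hp, hD s i q hq]
      simp [SimpleGraph.Walk.edges_cons]
    refine ⟨s, hjs, ?_, ?_⟩
    · rw [hDsymm i s, hDsymm i j, hDji]; ring
    · intro k hk hks
      have hknotin : k ∉ (SimpleGraph.Walk.cons hjs q).support := by
        intro hkmem
        set p := SimpleGraph.Walk.cons hjs q with hpdef
        have ht : (p.takeUntil k hkmem).IsPath := hp.takeUntil hkmem
        have hsingle : (SimpleGraph.Walk.cons hk.symm SimpleGraph.Walk.nil : G.Walk k j).IsPath := by
          simp [SimpleGraph.Walk.IsPath.nil, hk.symm.ne]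
        have huniq : (p.takeUntil k hkmem).reverse =
            SimpleGraph.Walk.cons hk.symm SimpleGraph.Walk.nil :=
          (hconn k j).unique ht.reverse hsingle
        have ht2 : p.takeUntil k hkmem =
            (SimpleGraph.Walk.cons hk.symm SimpleGraph.Walk.nil).reverse := by
          rw [← huniq, SimpleGraph.Walk.reverse_reverse]
        have hspec := p.take_spec hkmem
        rw [ht2] at hspec
        simp only [SimpleGraph.Walk.reverse_cons, SimpleGraph.Walk.reverse_nil,
          SimpleGraph.Walk.nil_append, SimpleGraph.Walk.cons_append] at hspec
        have hgv := congrArg (fun r => SimpleGraph.Walk.getVert r 1) hspec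
        simp only [hpdef, SimpleGraph.Walk.getVert_cons_succ,
          SimpleGraph.Walk.getVert_zero] at hgv
        exact hks hgv
      have hcons : (SimpleGraph.Walk.cons hk.symm (SimpleGraph.Walk.cons hjs q) :
          G.Walk k i).IsPath := hp.cons hknotin
      have : D k i = w (s(k, j)) + D j i := by
        rw [hD k i _ hcons, hD j i _ hp]
        simp [SimpleGraph.Walk.edges_cons]
      rw [hDsymm i k, hDsymm i j, this, Sym2.eq_swap]
      ring
  -- row sums of L are zero
  have hfilter : ∀ j : Fin n, (univ.erase j).filter (fun k => G.Adj k j) = G.neighborFinset j := by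
    intro j
    ext k
    simp only [Finset.mem_filter, Finset.mem_erase, Finset.mem_univ, true_and, and_true,
      SimpleGraph.mem_neighborFinset]
    rw [G.adj_comm]
    exact ⟨fun h => h.2, fun h => ⟨h.ne', h⟩⟩
  have hrow : ∀ i, ∑ k, L i k = 0 := by
    intro i
    rw [← Finset.add_sum_erase _ _ (Finset.mem_univ i)]
    have h1 : ∑ k ∈ univ.erase i, L i k = ∑ k ∈ G.neighborFinset i, -(w (s(i, k)))⁻¹ := by
      rw [← hfilter i, Finset.sum_filter]
      refine Finset.sum_congr rfl fun k hk => ?_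
      have hki : k ≠ i := (Finset.mem_erase.mp hk).1
      rw [hL i k, if_neg (Ne.symm hki)]
      by_cases h : G.Adj k i
      · rw [if_pos h, if_pos h.symm]
      · rw [if_neg h, if_neg fun hh => h hh.symm]
    rw [h1, hL i i, if_pos rfl]
    rw [← Finset.sum_add_distrib]
    simp
  -- compute D * L entries
  have hDL : ∀ i j, (D * L) i j = (2 - (G.degree j : ℝ)) - (if i = j then 2 else 0) := by
    intro i j
    rw [Matrix.mul_apply]
    rw [← Finset.add_sum_erase _ _ (Finset.mem_univ j)]
    have h1 : ∑ k ∈ univ.erase j, D i k * L k j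
        = ∑ k ∈ G.neighborFinset j, D i k * -(w (s(j, k)))⁻¹ := by
      rw [← hfilter j, Finset.sum_filter]
      refine Finset.sum_congr rfl fun k hk => ?_
      have hkj : k ≠ j := (Finset.mem_erase.mp hk).1
      rw [hL k j, if_neg hkj]
      by_cases h : G.Adj k j
      · rw [if_pos h, if_pos h, Sym2.eq_swap]
      · rw [if_neg h, if_neg h, mul_zero]
    rw [h1, hL j j, if_pos rfl, Finset.mul_sum, ← Finset.sum_add_distrib]
    have hsum : ∀ k ∈ G.neighborFinset j,
        D i j * (w (s(j, k)))⁻¹ + D i k * -(w (s(j, k)))⁻¹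
          = (D i j - D i k) * (w (s(j, k)))⁻¹ := by
      intro k _; ring
    rw [Finset.sum_congr rfl hsum]
    by_cases hij : i = j
    · subst hij
      have : ∀ k ∈ G.neighborFinset i, (D i i - D i k) * (w (s(i, k)))⁻¹ = -1 := by
        intro k hk
        have hadj : G.Adj i k := by simpa using hk
        rw [hDdiag, hDadj hadj]
        field_simp [(hwadj hadj).ne']
        ring
      rw [Finset.sum_congr rfl this, Finset.sum_const, SimpleGraph.card_neighborFinset_eq_degree]
      simp [nsmul_eq_mul]
      try ring
    · obtain ⟨s, hjs, hs, hk⟩ := hstep i j hij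
      have hsmem : s ∈ G.neighborFinset j := by simpa using hjs
      rw [← Finset.add_sum_erase _ _ hsmem]
      have hterm_s : (D i j - D i s) * (w (s(j, s)))⁻¹ = 1 := by
        rw [hs]
        field_simp [(hwadj hjs).ne']
        ring
      have hterm_k : ∀ k ∈ (G.neighborFinset j).erase s,
          (D i j - D i k) * (w (s(j, k)))⁻¹ = -1 := by
        intro k hkmem
        obtain ⟨hks, hkadjmem⟩ := Finset.mem_erase.mp hkmem
        have hadj : G.Adj j k := by simpa using hkadjmem
        rw [hk k hadj hks]
        field_simp [(hwadj hadj).ne']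
        ring
      rw [hterm_s, Finset.sum_congr rfl hterm_k, Finset.sum_const,
        Finset.card_erase_of_mem hsmem, SimpleGraph.card_neighborFinset_eq_degree]
      have hdeg : 1 ≤ G.degree j := by
        have := SimpleGraph.card_neighborFinset_eq_degree G j
        have : 0 < (G.neighborFinset j).card := Finset.card_pos.mpr ⟨s, hsmem⟩
        omega
      rw [if_neg hij, nsmul_eq_mul, Nat.cast_sub hdeg]
      push_cast
      ring
  -- assemble
  ext i j
  rw [mul_assoc, Matrix.mul_apply]
  have h1 : ∀ k, L i k * (D * L) k j
      = L i k * (2 - (G.degree j : ℝ)) - (if k = j then L i k * 2 else 0) := by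
    intro k
    rw [hDL k j]
    by_cases h : k = j <;> simp [h] <;> ring
  rw [Finset.sum_congr rfl fun k _ => h1 k, Finset.sum_sub_distrib, ← Finset.sum_mul, hrow,
    Finset.sum_ite_eq' univ j _]
  simp [mul_comm]
end helpers

set_option maxHeartbeats 1000000 in
/-- Let `T` be a tree on `n` vertices with positive real edge weights, `D` its
distance matrix and `L` the Laplacian obtained by replacing each weight by its reciprocal.
Let `μ₁ > 0 > μ₂ ≥ ⋯ ≥ μₙ` be the eigenvalues of `D` and
`λ₁ ≥ ⋯ ≥ λ_{n-1} > λₙ = 0` the eigenvalues of `L` (listed in nonincreasing order with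
multiplicity).  Then `0 > -2/λ₁ ≥ μ₂ ≥ -2/λ₂ ≥ μ₃ ≥ ⋯ ≥ -2/λ_{n-1} ≥ μₙ`.
(Here `μ` and `lam` are `0`-indexed, so `μᵢ` of the paper is `μ ⟨i-1, _⟩`.) -/
theorem scalar_distance_lap_eigenvalue_interlacing {n : ℕ} (hn : 1 ≤ n)
    (G : SimpleGraph (Fin n)) [DecidableRel G.Adj] (hT : G.IsTree)
    (w : Sym2 (Fin n) → ℝ)
    (hw : ∀ e ∈ G.edgeSet, 0 < w e)
    (D : Matrix (Fin n) (Fin n) ℝ)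
    (hD : ∀ (i j : Fin n) (p : G.Walk i j), p.IsPath → D i j = (p.edges.map w).sum)
    (L : Matrix (Fin n) (Fin n) ℝ)
    (hL : ∀ i j, L i j =
      if i = j then ∑ k ∈ G.neighborFinset i, (w (s(i, k)))⁻¹
      else if G.Adj i j then -(w (s(i, j)))⁻¹
      else 0)
    (hDh : D.IsHermitian) (hLh : L.IsHermitian)
    (μ lam : Fin n → ℝ) (hμa : Antitone μ) (hlama : Antitone lam)
    (hμ : ∃ σ : Fin n ≃ Fin n, ∀ k, μ k = hDh.eigenvalues (σ k))
    (hlam : ∃ σ : Fin n ≃ Fin n, ∀ k, lam k = hLh.eigenvalues (σ k))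
    (hμpos : 0 < μ ⟨0, hn⟩)
    (hμneg : ∀ k : Fin n, 1 ≤ (k : ℕ) → μ k < 0)
    (hlampos : ∀ k : Fin n, (k : ℕ) < n - 1 → 0 < lam k)
    (hlamzero : ∀ k : Fin n, n - 1 ≤ (k : ℕ) → lam k = 0) :
    -2 / lam ⟨0, hn⟩ < 0 ∧
      (∀ i : ℕ, (hi : i < n - 1) → μ ⟨i + 1, by omega⟩ ≤ -2 / lam ⟨i, by omega⟩) ∧
      (∀ i : ℕ, 1 ≤ i → (hi : i < n - 1) → -2 / lam ⟨i, by omega⟩ ≤ μ ⟨i, by omega⟩) := by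
  classical
  obtain ⟨σD, hσD⟩ := hμ
  obtain ⟨σL, hσL⟩ := hlam
  rcases eq_or_lt_of_le hn with h1 | h2
  · -- degenerate case n = 1 : contradiction with hμpos
    exfalso
    have hD0 : D = 0 := by
      ext i j
      have hij : i = j := Fin.ext (by omega)
      subst hij
      simpa using hD i i SimpleGraph.Walk.nil SimpleGraph.Walk.IsPath.nil
    have hmv := hDh.mulVec_eigenvectorBasis (σD ⟨0, hn⟩)
    have hz : ∀ y : Fin n → ℝ, D *ᵥ y = 0 := by
      intro y; rw [hD0]; exact Matrix.zero_mulVec y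
    rw [hz] at hmv
    have hnz := hDh.eigenvectorBasis.orthonormal.ne_zero (σD ⟨0, hn⟩)
    rcases smul_eq_zero.mp hmv.symm with h | h
    · rw [hσD ⟨0, hn⟩, h] at hμpos
      exact lt_irrefl 0 hμpos
    · apply hnz
      have := congrArg (WithLp.equiv 2 (Fin n → ℝ)).symm h
      simpa using this
  -- main case n ≥ 2
  have hkey := tree_LDL G hT w hw D hD L hL
  set u : Fin n → Fin n → ℝ :=
    fun k => (WithLp.equiv 2 (Fin n → ℝ)) (hDh.eigenvectorBasis (σD k)) with hudef
  set v : Fin n → Fin n → ℝ :=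
    fun k => (WithLp.equiv 2 (Fin n → ℝ)) (hLh.eigenvectorBasis (σL k)) with hvdef
  have hu_orth : ∀ k l, u k ⬝ᵥ u l = if k = l then 1 else 0 := by
    intro k l
    have h := orthonormal_iff_ite.mp hDh.eigenvectorBasis.orthonormal (σD k) (σD l)
    rw [EuclideanSpace.inner_eq_star_dotProduct] at h
    rw [dotProduct_comm]
    simpa [hudef, Equiv.apply_eq_iff_eq] using h
  have hv_orth : ∀ k l, v k ⬝ᵥ v l = if k = l then 1 else 0 := by
    intro k l
    have h := orthonormal_iff_ite.mp hLh.eigenvectorBasis.orthonormal (σL k) (σL l)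
    rw [EuclideanSpace.inner_eq_star_dotProduct] at h
    rw [dotProduct_comm]
    simpa [hvdef, Equiv.apply_eq_iff_eq] using h
  have hu_eig : ∀ l, D *ᵥ u l = μ l • u l := by
    intro l
    rw [hσD l]
    exact hDh.mulVec_eigenvectorBasis (σD l)
  have hv_eig : ∀ l, L *ᵥ v l = lam l • v l := by
    intro l
    rw [hσL l]
    exact hLh.mulVec_eigenvectorBasis (σL l)
  have hu_diagD : ∀ k l, u k ⬝ᵥ (D *ᵥ u l) = if k = l then μ k else 0 := by
    intro k l
    rw [hu_eig l, dotProduct_smul, hu_orth]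
    by_cases h : k = l <;> simp [h]
  have hLt : Lᵀ = L := by
    ext i j
    simpa using hLh.apply i j
  have hLsym : ∀ x y : Fin n → ℝ, x ⬝ᵥ (L *ᵥ y) = (L *ᵥ x) ⬝ᵥ y := by
    intro x y
    rw [dotProduct_mulVec, ← Matrix.mulVec_transpose, hLt]
  have hdiagv : ∀ k l : Fin n, (k : ℕ) < n - 1 → (l : ℕ) < n - 1 →
      v k ⬝ᵥ (D *ᵥ v l) = if k = l then -2 / lam k else 0 := by
    intro k l hk hl
    have hlamk := hlampos k hk
    have hlaml := hlampos l hl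
    have e1 : (lam k * lam l) * (v k ⬝ᵥ (D *ᵥ v l))
        = -2 * (lam l * (if k = l then 1 else 0)) := by
      calc (lam k * lam l) * (v k ⬝ᵥ (D *ᵥ v l))
          = (lam k • v k) ⬝ᵥ (D *ᵥ (lam l • v l)) := by
            rw [Matrix.mulVec_smul, smul_dotProduct, dotProduct_smul]
            simp only [smul_eq_mul]; ring
        _ = (L *ᵥ v k) ⬝ᵥ (D *ᵥ (L *ᵥ v l)) := by rw [hv_eig k, hv_eig l]
        _ = v k ⬝ᵥ (L *ᵥ (D *ᵥ (L *ᵥ v l))) := (hLsym _ _).symm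
        _ = v k ⬝ᵥ ((L * D * L) *ᵥ v l) := by
            rw [← Matrix.mulVec_mulVec, ← Matrix.mulVec_mulVec]
        _ = v k ⬝ᵥ (((-2 : ℝ) • L) *ᵥ v l) := by rw [hkey]
        _ = -2 * (v k ⬝ᵥ (L *ᵥ v l)) := by
            rw [Matrix.smul_mulVec, dotProduct_smul]; simp
        _ = -2 * (lam l * (if k = l then 1 else 0)) := by
            rw [hv_eig l, dotProduct_smul, hv_orth]; simp
    by_cases h : k = l
    · subst h
      rw [if_pos rfl] at e1
      rw [mul_one] at e1
      have e2 : lam k * (lam k * (v k ⬝ᵥ (D *ᵥ v k))) = lam k * (-2) := by linarith [e1]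
      have e3 := mul_left_cancel₀ hlamk.ne' e2
      rw [if_pos rfl, eq_div_iff hlamk.ne']
      linarith
    · rw [if_neg h] at e1 ⊢
      have e2 : (lam k * lam l) * (v k ⬝ᵥ (D *ᵥ v l)) = 0 := by rw [e1]; ring
      rcases mul_eq_zero.mp e2 with h' | h'
      · exact absurd h' (mul_ne_zero hlamk.ne' hlaml.ne')
      · exact h'
  have hxxpos : ∀ x : Fin n → ℝ, x ≠ 0 → 0 < x ⬝ᵥ x := by
    intro x hx0
    obtain ⟨i0, hi0⟩ := Function.ne_iff.mp hx0
    have hpos : 0 < x i0 * x i0 := mul_self_pos.mpr hi0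
    exact Finset.sum_pos' (fun i _ => mul_self_nonneg (x i)) ⟨i0, Finset.mem_univ _, hpos⟩
  refine ⟨div_neg_of_neg_of_pos (by norm_num) (hlampos ⟨0, hn⟩ (show (0:ℕ) < n - 1 by omega)), ?_, ?_⟩
  · -- μ_{i+1} ≤ -2/λ_i
    intro i hi
    set A : Finset (Fin n) := Finset.Iic ⟨i + 1, by omega⟩ with hAdef
    set B : Finset (Fin n) := Finset.Icc ⟨i, by omega⟩ ⟨n - 2, by omega⟩ with hBdef
    have hcard : n < A.card + B.card := by
      have hA : A.card = i + 2 := by rw [hAdef, Fin.card_Iic]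
      have hB : B.card = (n - 2) + 1 - i := by rw [hBdef, Fin.card_Icc]
      omega
    obtain ⟨x, hx0, hxA, hxB⟩ := exists_common_vec u v
      (li_of_orth u hu_orth) (li_of_orth v hv_orth) A B hcard
    obtain ⟨c, hc1, hc2⟩ := quad_repr D u hu_orth A μ (fun k _ l _ => hu_diagD k l) hxA
    have hBlt : ∀ k ∈ B, (k : ℕ) < n - 1 := by
      intro k hk
      have h5 := (Finset.mem_Icc.mp hk).2
      rw [Fin.le_def] at h5
      have h6 : (k : ℕ) ≤ n - 2 := h5
      omega
    obtain ⟨d, hd1, hd2⟩ := quad_repr D v hv_orth B (fun k => -2 / lam k)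
      (fun k hk l hl => hdiagv k l (hBlt k hk) (hBlt l hl)) hxB
    have hxx := hxxpos x hx0
    have hlow : μ ⟨i + 1, by omega⟩ * (x ⬝ᵥ x) ≤ x ⬝ᵥ (D *ᵥ x) := by
      rw [hc2, hc1, Finset.mul_sum]
      refine Finset.sum_le_sum fun a _ => ?_
      have hle : μ ⟨i + 1, by omega⟩ ≤ μ ↑a := hμa (Finset.mem_Iic.mp a.2)
      nlinarith [sq_nonneg (c a)]
    have hhigh : x ⬝ᵥ (D *ᵥ x) ≤ (-2 / lam ⟨i, by omega⟩) * (x ⬝ᵥ x) := by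
      rw [hd2, hd1, Finset.mul_sum]
      refine Finset.sum_le_sum fun b _ => ?_
      obtain ⟨hb1, hb2⟩ := Finset.mem_Icc.mp b.2
      have h1 : lam (↑b : Fin n) ≤ lam ⟨i, by omega⟩ := hlama hb1
      have h2 : 0 < lam (↑b : Fin n) := hlampos _ (hBlt _ b.2)
      have h3 : 0 < lam ⟨i, by omega⟩ := hlampos ⟨i, by omega⟩ hi
      have h4 : -2 / lam (↑b : Fin n) ≤ -2 / lam ⟨i, by omega⟩ := by
        rw [div_le_div_iff₀ h2 h3]
        nlinarith
      nlinarith [sq_nonneg (d b)]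
    exact le_of_mul_le_mul_right (by linarith) hxx
  · -- -2/λ_i ≤ μ_i
    intro i hi1 hi
    set A : Finset (Fin n) := Finset.Ici ⟨i, by omega⟩ with hAdef
    set B : Finset (Fin n) := Finset.Iic ⟨i, by omega⟩ with hBdef
    have hcard : n < A.card + B.card := by
      have hA : A.card = n - i := by rw [hAdef, Fin.card_Ici]
      have hB : B.card = i + 1 := by rw [hBdef, Fin.card_Iic]
      omega
    obtain ⟨x, hx0, hxA, hxB⟩ := exists_common_vec u v
      (li_of_orth u hu_orth) (li_of_orth v hv_orth) A B hcard
    obtain ⟨c, hc1, hc2⟩ := quad_repr D u hu_orth A μ (fun k _ l _ => hu_diagD k l) hxA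
    have hBlt : ∀ k ∈ B, (k : ℕ) < n - 1 := by
      intro k hk
      have h5 := Finset.mem_Iic.mp hk
      rw [Fin.le_def] at h5
      have h6 : (k : ℕ) ≤ i := h5
      omega
    obtain ⟨d, hd1, hd2⟩ := quad_repr D v hv_orth B (fun k => -2 / lam k)
      (fun k hk l hl => hdiagv k l (hBlt k hk) (hBlt l hl)) hxB
    have hxx := hxxpos x hx0
    have hlow : (-2 / lam ⟨i, by omega⟩) * (x ⬝ᵥ x) ≤ x ⬝ᵥ (D *ᵥ x) := by
      rw [hd2, hd1, Finset.mul_sum]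
      refine Finset.sum_le_sum fun b _ => ?_
      have hb1 : (↑b : Fin n) ≤ ⟨i, by omega⟩ := Finset.mem_Iic.mp b.2
      have h1 : lam ⟨i, by omega⟩ ≤ lam (↑b : Fin n) := hlama hb1
      have h2 : 0 < lam ⟨i, by omega⟩ := hlampos ⟨i, by omega⟩ hi
      have h3 : 0 < lam (↑b : Fin n) := hlampos _ (hBlt _ b.2)
      have h4 : -2 / lam ⟨i, by omega⟩ ≤ -2 / lam (↑b : Fin n) := by
        rw [div_le_div_iff₀ h2 h3]
        nlinarith
      nlinarith [sq_nonneg (d b)]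
    have hhigh : x ⬝ᵥ (D *ᵥ x) ≤ μ ⟨i, by omega⟩ * (x ⬝ᵥ x) := by
      rw [hc2, hc1, Finset.mul_sum]
      refine Finset.sum_le_sum fun a _ => ?_
      have hle : μ ↑a ≤ μ ⟨i, by omega⟩ := hμa (Finset.mem_Ici.mp a.2)
      nlinarith [sq_nonneg (c a)]
    exact le_of_mul_le_mul_right (by linarith) hxx
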